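/- Let C ⊆ ℝᵈ be nonempty closed convex, x ∈ C, and v ∈ ℝᵈ. Then the limit Π_C(x, v) := lim_{h→0⁺} (proj_C(x + h v) - x)/h exists and equals proj_{T_C(x)}(v), the metric projection of v onto the tangent cone of C at x. -/

import Mathlib

open scoped Topology

/-- The metric projection onto a set (well-defined for nonempty closed convex sets). -/
noncomputable def metricProj {d : ℕ} (S : Set (EuclideanSpace ℝ (Fin d)))
    (v : EuclideanSpace ℝ (Fin d)) : EuclideanSpace ℝ (Fin d) :=
  Classical.epsilon fun p => p ∈ S ∧ ∀ q ∈ S, ‖v - p‖ ≤ ‖v - q‖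

/-- The tangent cone of `C` at `x`: the closure of the cone of feasible directions
`⋃_{h>0} (C - x)/h`. -/
def tangentCone' {d : ℕ} (C : Set (EuclideanSpace ℝ (Fin d)))
    (x : EuclideanSpace ℝ (Fin d)) : Set (EuclideanSpace ℝ (Fin d)) :=
  closure {v | ∃ h : ℝ, 0 < h ∧ x + h • v ∈ C}

/-- For a nonempty closed convex set, the metric projection lies in the set, is a
minimizer, and satisfies the variational inequality. -/
lemma metricProj_spec {d : ℕ} {S : Set (EuclideanSpace ℝ (Fin d))}
    (hne : S.Nonempty) (hcl : IsClosed S) (hconv : Convex ℝ S)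
    (v : EuclideanSpace ℝ (Fin d)) :
    metricProj S v ∈ S ∧ (∀ q ∈ S, ‖v - metricProj S v‖ ≤ ‖v - q‖) ∧
      ∀ q ∈ S, inner ℝ (v - metricProj S v) (q - metricProj S v) ≤ (0 : ℝ) := by
  have hex : ∃ p, p ∈ S ∧ ∀ q ∈ S, ‖v - p‖ ≤ ‖v - q‖ := by
    obtain ⟨p, hp, hpi⟩ := exists_norm_eq_iInf_of_complete_convex hne hcl.isComplete hconv v
    refine ⟨p, hp, fun q hq => ?_⟩
    rw [hpi]
    exact ciInf_le ⟨0, fun r ⟨w, hw⟩ => hw ▸ norm_nonneg _⟩ (⟨q, hq⟩ : S)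
  have spec : metricProj S v ∈ S ∧ ∀ q ∈ S, ‖v - metricProj S v‖ ≤ ‖v - q‖ :=
    Classical.epsilon_spec hex
  obtain ⟨hmem, hmin⟩ := spec
  refine ⟨hmem, hmin, ?_⟩
  have : Nonempty S := ⟨⟨_, hmem⟩⟩
  rw [← norm_eq_iInf_iff_real_inner_le_zero hconv hmem]
  refine le_antisymm (le_ciInf fun w => hmin w w.2) ?_
  exact ciInf_le ⟨0, fun r ⟨w, hw⟩ => hw ▸ norm_nonneg _⟩ (⟨_, hmem⟩ : S)

/-- for a nonempty closed convex `C`, `x ∈ C` and `v`, the limit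
`lim_{h→0⁺} (proj_C(x + h v) - x)/h` exists and equals the projection of `v` onto the
tangent cone of `C` at `x`. -/
theorem stmt19 {d : ℕ} (C : Set (EuclideanSpace ℝ (Fin d)))
    (hne : C.Nonempty) (hcl : IsClosed C) (hconv : Convex ℝ C)
    (x : EuclideanSpace ℝ (Fin d)) (hx : x ∈ C) (v : EuclideanSpace ℝ (Fin d)) :
    Filter.Tendsto (fun h : ℝ => h⁻¹ • (metricProj C (x + h • v) - x))
      (𝓝[>] (0 : ℝ)) (𝓝 (metricProj (tangentCone' C x) v)) := by
  classical
  set D : Set (EuclideanSpace ℝ (Fin d)) := {w | ∃ h : ℝ, 0 < h ∧ x + h • w ∈ C} with hD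
  -- shrink lemma
  have shrink : ∀ {w : EuclideanSpace ℝ (Fin d)} {h h' : ℝ}, 0 < h' → h' ≤ h →
      x + h • w ∈ C → x + h' • w ∈ C := by
    intro w h h' hh' hle hmem
    have hh : 0 < h := lt_of_lt_of_le hh' hle
    have key : x + h' • w = (1 - h' / h) • x + (h' / h) • (x + h • w) := by
      have hne' : h ≠ 0 := ne_of_gt hh
      rw [smul_add, smul_smul, div_mul_cancel₀ _ hne']
      module
    rw [key]
    exact hconv hx hmem (by rw [sub_nonneg]; exact (div_le_one hh).mpr hle)
      (by positivity) (by ring)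
  have h0D : (0 : EuclideanSpace ℝ (Fin d)) ∈ D := ⟨1, one_pos, by simpa using hx⟩
  have hDconv : Convex ℝ D := by
    intro w₁ hw₁ w₂ hw₂ a b ha hb hab
    obtain ⟨h₁, h₁pos, h₁mem⟩ := hw₁
    obtain ⟨h₂, h₂pos, h₂mem⟩ := hw₂
    refine ⟨min h₁ h₂, lt_min h₁pos h₂pos, ?_⟩
    have m₁ : x + min h₁ h₂ • w₁ ∈ C := shrink (lt_min h₁pos h₂pos) (min_le_left _ _) h₁mem
    have m₂ : x + min h₁ h₂ • w₂ ∈ C := shrink (lt_min h₁pos h₂pos) (min_le_right _ _) h₂mem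
    have key : x + min h₁ h₂ • (a • w₁ + b • w₂)
        = a • (x + min h₁ h₂ • w₁) + b • (x + min h₁ h₂ • w₂) := by
      match_scalars <;> linarith [hab]
    rw [key]
    exact hconv m₁ m₂ ha hb hab
  set K := tangentCone' C x with hK
  obtain ⟨hwK, hwmin, hwvar⟩ := metricProj_spec (hne := ⟨0, subset_closure h0D⟩)
    (hcl := isClosed_closure) (hconv := hDconv.closure) v
  set w := metricProj K v with hw
  rw [Metric.tendsto_nhds]
  intro ε hε
  -- find u ∈ D with ‖v - u‖² < ‖v - w‖² + ε²
  have hopen : IsOpen {u : EuclideanSpace ℝ (Fin d) | ‖v - u‖ ^ 2 < ‖v - w‖ ^ 2 + ε ^ 2} := by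
    have : Continuous fun u : EuclideanSpace ℝ (Fin d) => ‖v - u‖ ^ 2 := by fun_prop
    exact isOpen_lt this continuous_const
  have hwmemO : w ∈ {u : EuclideanSpace ℝ (Fin d) | ‖v - u‖ ^ 2 < ‖v - w‖ ^ 2 + ε ^ 2} := by
    simp only [Set.mem_setOf_eq]; nlinarith
  obtain ⟨u, huO, huD⟩ := _root_.mem_closure_iff.mp hwK _ hopen hwmemO
  obtain ⟨h₁, h₁pos, h₁mem⟩ := huD
  filter_upwards [Ioc_mem_nhdsGT_of_mem (Set.mem_Ico.mpr ⟨le_refl (0:ℝ), h₁pos⟩)] with h hh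
  obtain ⟨hpos, hle⟩ := hh
  have hne' : h ≠ 0 := ne_of_gt hpos
  -- the projection at scale h
  obtain ⟨hpC, hpmin, hpvar⟩ := metricProj_spec hne hcl hconv (x + h • v)
  set p := metricProj C (x + h • v) with hp
  set wh := h⁻¹ • (p - x) with hwh
  have hpeq : p = x + h • wh := by
    rw [hwh, smul_smul, mul_inv_cancel₀ hne', one_smul]; abel
  -- wh ∈ D
  have hwhD : wh ∈ D := ⟨h, hpos, by rw [← hpeq]; exact hpC⟩
  -- variational inequality scaled
  have hvar : ∀ u' : EuclideanSpace ℝ (Fin d), x + h • u' ∈ C →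
      inner ℝ (v - wh) (u' - wh) ≤ (0 : ℝ) := by
    intro u' hu'
    have hI := hpvar _ hu'
    have e1 : x + h • v - p = h • (v - wh) := by rw [hpeq]; module
    have e2 : x + h • u' - p = h • (u' - wh) := by rw [hpeq]; module
    rw [e1, e2, real_inner_smul_left, real_inner_smul_right] at hI
    have t1 : h * inner ℝ (v - wh) (u' - wh) ≤ 0 :=
      le_of_mul_le_mul_left (by linarith [hI]) hpos
    exact le_of_mul_le_mul_left (by linarith [t1]) hpos
  have huC : x + h • u ∈ C := shrink hpos hle h₁mem
  have hvu : inner ℝ (v - wh) (u - wh) ≤ (0 : ℝ) := hvar u huC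
  have hmin2 : ‖v - wh‖ ^ 2 ≤ ‖v - u‖ ^ 2 := by
    have expand : ‖v - u‖ ^ 2
        = ‖v - wh‖ ^ 2 - 2 * inner ℝ (v - wh) (u - wh) + ‖u - wh‖ ^ 2 := by
      rw [show v - u = (v - wh) - (u - wh) by abel, norm_sub_sq_real]
    rw [expand]
    nlinarith [sq_nonneg ‖u - wh‖, hvu]
  -- strong convexity
  have hvw : inner ℝ (v - w) (wh - w) ≤ (0 : ℝ) := hwvar wh (subset_closure hwhD)
  have hkey : ‖wh - w‖ ^ 2 ≤ ‖v - wh‖ ^ 2 - ‖v - w‖ ^ 2 := by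
    have expand : ‖v - wh‖ ^ 2
        = ‖v - w‖ ^ 2 - 2 * inner ℝ (v - w) (wh - w) + ‖wh - w‖ ^ 2 := by
      rw [show v - wh = (v - w) - (wh - w) by abel, norm_sub_sq_real]
    linarith [expand, hvw]
  -- conclude
  have hsq : ‖wh - w‖ ^ 2 < ε ^ 2 := by
    have := huO
    simp only [Set.mem_setOf_eq] at this
    linarith
  have hlt : ‖wh - w‖ < ε := by nlinarith [norm_nonneg (wh - w)]
  simpa [dist_eq_norm] using hlt
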